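/- arXiv:1611.09986 — 2 statements merged into one kernel-verified Lean document; each statement's English description precedes it below -/
import Mathlib

section
/- Let S = S_{g,n} be a connected orientable surface with genus g ≥ 1, empty boundary and n ≥ 0 punctures, and let T be a triangle in HT(S). Then there exists a unique multicurve M of cardinality g−1 such that M is contained in every element of T. -/
namespace HTPaper

/-- Abstract model of a connected orientable surface `S_{g,n}` of genus `g` with `n` punctures
and empty boundary, together with the standard data on isotopy classes of essential simple
closed curves: geometric intersection numbers and the topology of complements of multicurves. -/
structure Surface where
  /-- genus -/
  g : ℕ
  /-- number of punctures -/
  n : ℕ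
  /-- isotopy classes of essential simple closed curves -/
  Curve : Type
  deceq : DecidableEq Curve
  /-- geometric intersection number -/
  inter : Curve → Curve → ℕ
  inter_symm : ∀ a b, inter a b = inter b a
  inter_self : ∀ a, inter a a = 0
  /-- number of connected components of the complement of a finite set of curves -/
  components : Finset Curve → ℕ
  /-- every connected component of the complement of the given set of curves has genus zero -/
  allComplGenusZero : Finset Curve → Prop
  /-- the boundary curve of a closed regular neighbourhood of a chain (of even length) -/
  chainBd : List Curve → Curve
  /-- the two curves are spherical-Farey neighbours of type A -/
  SFTypeA : Curve → Curve → Prop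

attribute [instance] Surface.deceq

namespace Surface

variable (S : Surface)

/-- a multicurve: a nonempty set of pairwise disjoint (distinct) curves -/
def IsMulticurve (M : Finset S.Curve) : Prop :=
  M.Nonempty ∧ (M : Set S.Curve).Pairwise fun a b => S.inter a b = 0

/-- the complement of the given set of curves is connected -/
def ComplConn (M : Finset S.Curve) : Prop := S.components M = 1

/-- a nonseparating curve -/
def Nonsep (a : S.Curve) : Prop := S.components {a} = 1

/-- a separating curve -/
def Separating (a : S.Curve) : Prop := S.components {a} ≠ 1

/-- a cut system: a multicurve of cardinality `g` with connected complement -/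
def IsCutSystem (C : Finset S.Curve) : Prop :=
  S.IsMulticurve C ∧ C.card = S.g ∧ S.ComplConn C

/-- elementary move: the two cut systems share exactly `g - 1` curves and the
remaining two curves intersect exactly once -/
def ElemMove (C₁ C₂ : Finset S.Curve) : Prop :=
  (C₁ ∩ C₂).card = S.g - 1 ∧ ∀ a ∈ C₁ \ C₂, ∀ b ∈ C₂ \ C₁, S.inter a b = 1

/-- adjacency in the Hatcher–Thurston graph `HT(S)` -/
def HTAdj (C₁ C₂ : Finset S.Curve) : Prop :=
  S.IsCutSystem C₁ ∧ S.IsCutSystem C₂ ∧ C₁ ≠ C₂ ∧ S.ElemMove C₁ C₂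

/-- `A ∼_C B` : `A` and `B` are in the same colour of `lk(C)` -/
def SameColour (C A B : Finset S.Curve) : Prop := A ∩ C = B ∩ C

/-- the two cut systems differ in exactly two curves -/
def DifferTwo (A B : Finset S.Curve) : Prop := (A \ B).card = 2 ∧ (B \ A).card = 2

/-- `C₁, C₂, C₃, C₄` are the consecutive vertices of an alternating square in `HT(S)` -/
def AltSquare (C₁ C₂ C₃ C₄ : Finset S.Curve) : Prop :=
  S.HTAdj C₁ C₂ ∧ S.HTAdj C₂ C₃ ∧ S.HTAdj C₃ C₄ ∧ S.HTAdj C₄ C₁ ∧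
  C₁ ≠ C₂ ∧ C₁ ≠ C₃ ∧ C₁ ≠ C₄ ∧ C₂ ≠ C₃ ∧ C₂ ≠ C₄ ∧ C₃ ≠ C₄ ∧
  ¬ S.SameColour C₂ C₁ C₃ ∧ ¬ S.SameColour C₃ C₂ C₄

/-- a triangle in `HT(S)`: three distinct cut systems pairwise spanning edges -/
def IsTriangle (T : Finset (Finset S.Curve)) : Prop :=
  T.card = 3 ∧ ∀ A ∈ T, ∀ B ∈ T, A ≠ B → S.HTAdj A B

/-- a pants decomposition: a maximal multicurve -/
def IsPants (P : Finset S.Curve) : Prop :=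
  S.IsMulticurve P ∧ ∀ Q, S.IsMulticurve Q → P ⊆ Q → Q = P

/-- a halving multicurve: `g + 1` nonseparating curves cutting the surface into two
genus-zero connected components -/
def IsHalving (H : Finset S.Curve) : Prop :=
  S.IsMulticurve H ∧ (∀ a ∈ H, S.Nonsep a) ∧ H.card = S.g + 1 ∧
  S.components H = 2 ∧ S.allComplGenusZero H

/-- a cutting halving multicurve: a halving multicurve any `g` elements of which
form a cut system -/
def IsCuttingHalving (H : Finset S.Curve) : Prop :=
  S.IsHalving H ∧ ∀ C ⊆ H, C.card = S.g → S.IsCutSystem C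

/-- a chain: consecutive curves intersect once, non-consecutive curves are disjoint -/
def IsChain (X : List S.Curve) : Prop :=
  X.Nodup ∧ ∀ j l : Fin X.length,
    ((j : ℕ) + 1 = (l : ℕ) → S.inter (X.get j) (X.get l) = 1) ∧
    ((j : ℕ) + 2 ≤ (l : ℕ) → S.inter (X.get j) (X.get l) = 0)

/-- a defining chain of a separating curve `β`: a chain (of even length) whose closed
regular neighbourhood has boundary curve `β` -/
def IsDefiningChain (X : List S.Curve) (β : S.Curve) : Prop :=
  S.IsChain X ∧ X.length % 2 = 0 ∧ 0 < X.length ∧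
  (∀ a ∈ X, a ≠ β ∧ S.inter a β = 0) ∧ S.chainBd X = β

end Surface

/-- a map of vertices of Hatcher–Thurston graphs: cut systems go to cut systems -/
def VertexMap (S₁ S₂ : Surface) (φ : Finset S₁.Curve → Finset S₂.Curve) : Prop :=
  ∀ C, S₁.IsCutSystem C → S₂.IsCutSystem (φ C)

/-- an edge-preserving map: distinct adjacent cut systems have distinct adjacent images -/
def EdgePreserving (S₁ S₂ : Surface) (φ : Finset S₁.Curve → Finset S₂.Curve) : Prop :=
  ∀ C₁ C₂, S₁.HTAdj C₁ C₂ → S₂.HTAdj (φ C₁) (φ C₂)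

/-- an alternating map: if `C₁, C₂ ∈ lk(C)` differ in exactly two curves then so do
their images -/
def Alternating (S₁ S₂ : Surface) (φ : Finset S₁.Curve → Finset S₂.Curve) : Prop :=
  ∀ C C₁ C₂, S₁.HTAdj C C₁ → S₁.HTAdj C C₂ → S₁.DifferTwo C₁ C₂ →
    S₂.DifferTwo (φ C₁) (φ C₂)

/-- the defining property of the map `ψ` induced on nonseparating curves: `ψ α` is the
(unique, by Theorem A) curve contained in `φ C` for every cut system `C` containing `α` -/
def InducedCurveMap (S₁ S₂ : Surface) (φ : Finset S₁.Curve → Finset S₂.Curve)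
    (ψ : S₁.Curve → S₂.Curve) : Prop :=
  ∀ α, S₁.Nonsep α → ∀ C, S₁.IsCutSystem C → α ∈ C → ψ α ∈ φ C

/-- Abstract model of the map `π_C` obtained by filling the punctures of `S₂` and identifying
the result with `S₁`. -/
structure Filling (S₂ S₁ : Surface) where
  /-- the induced map `π_C` on curves -/
  toFun : S₂.Curve → S₁.Curve
  nonsep : ∀ a, S₂.Nonsep a → S₁.Nonsep (toFun a)
  inter_le : ∀ a b, S₁.inter (toFun a) (toFun b) ≤ S₂.inter a b
  inter_one : ∀ a b, S₂.Nonsep a → S₂.Nonsep b → S₂.inter a b = 1 →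
    S₁.inter (toFun a) (toFun b) = 1
  /-- the induced map `π_HT` sends cut systems to cut systems -/
  cut : ∀ C, S₂.IsCutSystem C → S₁.IsCutSystem (C.image toFun)

/-- the action on curves of a (self-)homeomorphism of `S`: a bijection of curves preserving
intersection numbers and the topology of complements -/
structure Homeo (S : Surface) where
  toFun : S.Curve → S.Curve
  bij : Function.Bijective toFun
  inter_eq : ∀ a b, S.inter (toFun a) (toFun b) = S.inter a b
  components_eq : ∀ M : Finset S.Curve, S.components (M.image toFun) = S.components M

/-- the map `φ` on the Hatcher–Thurston graph is induced by a homeomorphism of `S` -/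
def InducedByHomeo (S : Surface) (φ : Finset S.Curve → Finset S.Curve) : Prop :=
  ∃ h : Homeo S, ∀ C, S.IsCutSystem C → φ C = C.image h.toFun


private lemma sdiff_singleton_of (S : Surface) (hg : 1 ≤ S.g)
    {A B : Finset S.Curve} (hA : A.card = S.g) (h : (A ∩ B).card = S.g - 1)
    {x : S.Curve} (hxA : x ∈ A) (hxB : x ∉ B) : A \ B = {x} := by
  have hcd : (A \ B).card = 1 := by
    have := Finset.card_sdiff_add_card_inter A B
    omega
  obtain ⟨a, ha⟩ := Finset.card_eq_one.mp hcd
  have : x ∈ A \ B := Finset.mem_sdiff.mpr ⟨hxA, hxB⟩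
  rw [ha] at this
  rw [ha, Finset.mem_singleton.mp this]

private lemma inter_subset_third (S : Surface) (hg : 1 ≤ S.g)
    {A B C : Finset S.Curve} (hAB : S.HTAdj A B) (hAC : S.HTAdj A C)
    (hBC : S.HTAdj B C) : A ∩ B ⊆ C := by
  intro x hx
  obtain ⟨hxA, hxB⟩ := Finset.mem_inter.mp hx
  by_contra hxC
  have hAcard : A.card = S.g := hAC.1.2.1
  have hBcard : B.card = S.g := hBC.1.2.1
  have hCcard : C.card = S.g := hAC.2.1.2.1
  have hACi : (A ∩ C).card = S.g - 1 := hAC.2.2.2.1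
  have hBCi : (B ∩ C).card = S.g - 1 := hBC.2.2.2.1
  have hCAi : (C ∩ A).card = S.g - 1 := by rwa [Finset.inter_comm]
  have hCBi : (C ∩ B).card = S.g - 1 := by rwa [Finset.inter_comm] at hBCi
  -- A \ C = {x}
  have hACx : A \ C = {x} := sdiff_singleton_of S hg hAcard hACi hxA hxC
  -- C \ A = {c}
  have hCAcard : (C \ A).card = 1 := by
    have := Finset.card_sdiff_add_card_inter C A
    omega
  obtain ⟨c, hc⟩ := Finset.card_eq_one.mp hCAcard
  have hcmem : c ∈ C \ A := by rw [hc]; exact Finset.mem_singleton_self c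
  obtain ⟨hcC, hcA⟩ := Finset.mem_sdiff.mp hcmem
  -- inter x c = 1
  have hxc1 : S.inter x c = 1 := by
    refine hAC.2.2.2.2 x ?_ c hcmem
    rw [hACx]; exact Finset.mem_singleton_self x
  by_cases hcB : c ∈ B
  · -- x, c ∈ B distinct, so they are disjoint: contradiction
    have hxnec : x ≠ c := fun h => hcA (h ▸ hxA)
    have hpw := hBC.1.1.2
    have := hpw (Finset.mem_coe.mpr hxB) (Finset.mem_coe.mpr hcB) hxnec
    omega
  · -- C \ B = {c}, B \ C = {x}, then A ⊆ B and A = B, contradiction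
    have hCBx : C \ B = {c} := sdiff_singleton_of S hg hCcard hCBi hcC hcB
    have hAsubB : A ⊆ B := by
      intro y hyA
      by_cases hyx : y = x
      · exact hyx ▸ hxB
      · have hyC : y ∈ C := by
          by_contra hyC
          have : y ∈ A \ C := Finset.mem_sdiff.mpr ⟨hyA, hyC⟩
          rw [hACx] at this
          exact hyx (Finset.mem_singleton.mp this)
        by_contra hyB
        have : y ∈ C \ B := Finset.mem_sdiff.mpr ⟨hyC, hyB⟩
        rw [hCBx] at this
        exact hcA ((Finset.mem_singleton.mp this) ▸ hyA)
    have : A = B := Finset.eq_of_subset_of_card_le hAsubB (by omega)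
    exact hAB.2.2.1 this

/-- For every triangle `T` in `HT(S)` (genus `g ≥ 1`) there is a unique multicurve `M` of
cardinality `g − 1` contained in every element of `T`. -/
theorem lemma_multicurve_in_triangle (S : Surface) (hg : 1 ≤ S.g)
    (T : Finset (Finset S.Curve)) (hT : S.IsTriangle T) :
    ∃! M : Finset S.Curve,
      M.card = S.g - 1 ∧
      ((M : Set S.Curve).Pairwise fun a b => S.inter a b = 0) ∧
      ∀ A ∈ T, M ⊆ A := by
  obtain ⟨hcard, hadj⟩ := hT
  obtain ⟨A, B, C, hAB, hAC, hBC, rfl⟩ := Finset.card_eq_three.mp hcard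
  have mA : A ∈ ({A, B, C} : Finset (Finset S.Curve)) := by simp
  have mB : B ∈ ({A, B, C} : Finset (Finset S.Curve)) := by simp
  have mC : C ∈ ({A, B, C} : Finset (Finset S.Curve)) := by simp
  have adjAB := hadj A mA B mB hAB
  have adjAC := hadj A mA C mC hAC
  have adjBC := hadj B mB C mC hBC
  have hsub : A ∩ B ⊆ C := inter_subset_third S hg adjAB adjAC adjBC
  have hcardAB : (A ∩ B).card = S.g - 1 := adjAB.2.2.2.1
  refine ⟨A ∩ B, ⟨hcardAB, ?_, ?_⟩, ?_⟩
  · exact (adjAB.1.1.2).mono (Finset.coe_subset.mpr Finset.inter_subset_left)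
  · intro D hD
    rcases Finset.mem_insert.mp hD with rfl | hD
    · exact Finset.inter_subset_left
    · rcases Finset.mem_insert.mp hD with rfl | hD
      · exact Finset.inter_subset_right
      · rw [Finset.mem_singleton.mp hD]; exact hsub
  · rintro M ⟨hMcard, -, hMsub⟩
    exact Finset.eq_of_subset_of_card_le
      (Finset.subset_inter (hMsub A mA) (hMsub B mB)) (by omega)

end HTPaper
end

section
/- Let S = S_{g,n} be a connected orientable surface of genus g ≥ 2 with empty boundary and n ≥ 0 punctures, and let C₁, C₂, C₃, C₄ be consecutive vertices of an alternating square in HT(S). Then the multicurve C₁ ∩ C₂ ∩ C₃ ∩ C₄ has cardinality g−2. -/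
namespace HTPaper

/-- helper: two sets with the same difference against a third set are equal -/
lemma eq_of_sdiff_eq {α : Type*} [DecidableEq α] {A B D : Finset α}
    (h1 : A \ D = B \ D) (h2 : D \ A = D \ B) : A = B := by
  have hA : A = A \ D ∪ D \ (D \ A) := by
    rw [Finset.sdiff_sdiff_self_left, Finset.inter_comm, Finset.sdiff_union_inter]
  have hB : B = B \ D ∪ D \ (D \ B) := by
    rw [Finset.sdiff_sdiff_self_left, Finset.inter_comm, Finset.sdiff_union_inter]
  rw [hA, hB, h1, h2]

/-- helper: a singleton difference -/
lemma sdiff_eq_singleton {α : Type*} [DecidableEq α] {A B : Finset α} {x : α}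
    (hcard : (A \ B).card = 1) (hx : x ∈ A \ B) : A \ B = {x} := by
  obtain ⟨a, ha⟩ := Finset.card_eq_one.mp hcard
  rw [ha] at hx ⊢
  rw [Finset.mem_singleton] at hx
  rw [hx]

/-- If `C₁, C₂, C₃, C₄` are consecutive vertices of an alternating square in `HT(S)`
(genus `g ≥ 2`), then `C₁ ∩ C₂ ∩ C₃ ∩ C₄` has cardinality `g − 2`. -/
theorem lemma_altsquare_card (S : Surface) (hg : 2 ≤ S.g)
    (C₁ C₂ C₃ C₄ : Finset S.Curve) (h : S.AltSquare C₁ C₂ C₃ C₄) :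
    (C₁ ∩ C₂ ∩ C₃ ∩ C₄).card = S.g - 2 := by
  obtain ⟨h12, h23, h34, h41, -, hne13, -, -, -, -, hcol2, hcol3⟩ := h
  set g := S.g with hgdef
  -- cards of the cut systems
  have hc1 : C₁.card = g := h12.1.2.1
  have hc2 : C₂.card = g := h12.2.1.2.1
  have hc3 : C₃.card = g := h23.2.1.2.1
  have hc4 : C₄.card = g := h34.2.1.2.1
  -- cards of intersections along edges
  have hi12 : (C₁ ∩ C₂).card = g - 1 := h12.2.2.2.1
  have hi23 : (C₂ ∩ C₃).card = g - 1 := h23.2.2.2.1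
  have hi34 : (C₃ ∩ C₄).card = g - 1 := h34.2.2.2.1
  have hi41 : (C₄ ∩ C₁).card = g - 1 := h41.2.2.2.1
  -- singleton differences
  have hd34 : (C₃ \ C₄).card = 1 := by
    have := Finset.card_sdiff_add_card_inter C₃ C₄
    omega
  have hd43 : (C₄ \ C₃).card = 1 := by
    have := Finset.card_sdiff_add_card_inter C₄ C₃
    rw [Finset.inter_comm] at this
    omega
  have hd14 : (C₁ \ C₄).card = 1 := by
    have := Finset.card_sdiff_add_card_inter C₁ C₄
    rw [Finset.inter_comm] at this
    omega
  have hd41 : (C₄ \ C₁).card = 1 := by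
    have := Finset.card_sdiff_add_card_inter C₄ C₁
    omega
  -- Step 1: |C₁ ∩ C₂ ∩ C₃| = g - 2
  set X := C₁ ∩ C₂ with hXdef
  set Y := C₃ ∩ C₂ with hYdef
  have hXY : X ≠ Y := hcol2
  have hYcard : Y.card = g - 1 := by rw [hYdef, Finset.inter_comm]; exact hi23
  have hXsub : X ⊆ C₂ := Finset.inter_subset_right
  have hYsub : Y ⊆ C₂ := Finset.inter_subset_right
  have hUnion : (X ∪ Y).card = g := by
    have hle : (X ∪ Y).card ≤ g := by
      have := Finset.card_le_card (Finset.union_subset hXsub hYsub)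
      omega
    have hlt : X.card < (X ∪ Y).card := by
      apply Finset.card_lt_card
      refine ⟨Finset.subset_union_left, fun hsub => ?_⟩
      have : Y ⊆ X := Finset.union_subset_iff.mp
        (Finset.Subset.trans Finset.Subset.rfl hsub) |>.2
      exact hXY (Finset.eq_of_subset_of_card_le this (by omega)).symm
    omega
  have hIC : (X ∩ Y).card = g - 2 := by
    have := Finset.card_union_add_card_inter X Y
    omega
  have hXYeq : X ∩ Y = C₁ ∩ C₂ ∩ C₃ := by
    ext t
    simp only [hXdef, hYdef, Finset.mem_inter]
    tauto
  have hD : (C₁ ∩ C₂ ∩ C₃).card = g - 2 := by rw [← hXYeq]; exact hIC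
  -- Step 2: C₁ ∩ C₂ ∩ C₃ ⊆ C₄
  have hsub4 : C₁ ∩ C₂ ∩ C₃ ⊆ C₄ := by
    intro x hx
    simp only [Finset.mem_inter] at hx
    obtain ⟨⟨hx1, hx2⟩, hx3⟩ := hx
    by_contra hx4
    -- x is the unique element of C₃ \ C₄ and of C₁ \ C₄
    have e34 : C₃ \ C₄ = {x} := sdiff_eq_singleton hd34 (Finset.mem_sdiff.mpr ⟨hx3, hx4⟩)
    have e14 : C₁ \ C₄ = {x} := sdiff_eq_singleton hd14 (Finset.mem_sdiff.mpr ⟨hx1, hx4⟩)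
    -- the unique element y of C₄ \ C₃ intersects x once
    obtain ⟨y, e43⟩ := Finset.card_eq_one.mp hd43
    have hy : y ∈ C₄ \ C₃ := by rw [e43]; exact Finset.mem_singleton_self y
    rw [Finset.mem_sdiff] at hy
    have hixy : S.inter x y = 1 :=
      h34.2.2.2.2 x (by rw [e34]; exact Finset.mem_singleton_self x)
        y (by rw [e43]; exact Finset.mem_singleton_self y)
    -- y ∉ C₁ (else C₁ would not be a multicurve)
    have hy1 : y ∉ C₁ := by
      intro hy1
      have hxy : x ≠ y := fun he => hy.2 (he ▸ hx3)
      have := h12.1.1.2 hx1 hy1 hxy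
      omega
    have e41 : C₄ \ C₁ = {y} :=
      sdiff_eq_singleton hd41 (Finset.mem_sdiff.mpr ⟨hy.1, hy1⟩)
    have e43' : C₄ \ C₃ = {y} := e43
    -- hence C₁ = C₃, contradiction
    exact hne13 (eq_of_sdiff_eq (e14.trans e34.symm) (e41.trans e43'.symm))
  have : C₁ ∩ C₂ ∩ C₃ ∩ C₄ = C₁ ∩ C₂ ∩ C₃ := Finset.inter_eq_left.mpr hsub4
  rw [this, hD]

end HTPaper
end
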